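/- Let X ~ Bin(r, c·q) and X' ~ Bin(r, q) for c ∈ [0,1], and let X1,...,Xk be i.i.d. copies of X and X'1,...,X'k i.i.d. copies of X'. Then E[max_i Xi] ≥ c · E[max_i X'i]. -/

import Mathlib

/-- Probability mass function of a Binomial(n, p) random variable at value `j`. -/
def binomPMF (n : ℕ) (p : ℝ) (j : ℕ) : ℝ :=
  (n.choose j : ℝ) * p ^ j * (1 - p) ^ (n - j)

lemma binomPMF_nonneg {n : ℕ} {p : ℝ} (h0 : 0 ≤ p) (h1 : p ≤ 1) (j : ℕ) :
    0 ≤ binomPMF n p j :=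
  mul_nonneg (mul_nonneg (by positivity) (by positivity)) (pow_nonneg (by linarith) _)

lemma sum_binomPMF (r m : ℕ) (hm : m ≤ r) (c : ℝ) :
    ∑ j ∈ Finset.range (r + 1), binomPMF m c j = 1 := by
  rw [← Finset.sum_subset (Finset.range_subset_range.mpr (by omega : m + 1 ≤ r + 1))
      (fun j _ hj => by
        simp only [Finset.mem_range, not_lt] at hj
        simp [binomPMF, Nat.choose_eq_zero_of_lt (by omega : m < j)])]
  have h := add_pow c (1 - c) m
  simp only [add_sub_cancel, one_pow] at h
  rw [h]
  exact Finset.sum_congr rfl fun j _ => by unfold binomPMF; ring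

lemma mean_binomPMF (r m : ℕ) (hm : m ≤ r) (c : ℝ) :
    ∑ j ∈ Finset.range (r + 1), binomPMF m c j * j = c * m := by
  cases m with
  | zero =>
    rw [Finset.sum_eq_zero, Nat.cast_zero, mul_zero]
    intro j hj
    rcases Nat.eq_zero_or_pos j with h | h
    · simp [h]
    · simp [binomPMF, Nat.choose_eq_zero_of_lt h]
  | succ n =>
    obtain ⟨s, rfl⟩ : ∃ s, r = s + 1 := ⟨r - 1, by omega⟩
    rw [Finset.sum_range_succ']
    simp only [binomPMF, Nat.cast_zero, mul_zero, add_zero]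
    have key : ∀ k ∈ Finset.range (s+1),
        ((n+1).choose (k+1) : ℝ) * c ^ (k+1) * (1-c) ^ (n+1-(k+1)) * ((k+1 : ℕ) : ℝ)
        = (c * ((n+1 : ℕ) : ℝ)) * ((n.choose k : ℝ) * c ^ k * (1-c) ^ (n-k)) := by
      intro k _
      have h := Nat.add_one_mul_choose_eq n k
      have h2 : ((n+1 : ℕ) : ℝ) * (n.choose k : ℝ) = ((n+1).choose (k+1) : ℝ) * ((k+1 : ℕ) : ℝ) := by
        exact_mod_cast congrArg (Nat.cast : ℕ → ℝ) h
      push_cast at h2 ⊢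
      linear_combination (-(c ^ (k+1) * (1-c) ^ (n-k))) * h2
    rw [Finset.sum_congr rfl key, ← Finset.mul_sum]
    have h1 := sum_binomPMF s n (by omega) c
    unfold binomPMF at h1
    rw [h1, mul_one]

lemma thin_binomPMF (r j : ℕ) (hj : j ≤ r) (q c : ℝ) :
    ∑ m ∈ Finset.range (r + 1), binomPMF r q m * binomPMF m c j
      = binomPMF r (c * q) j := by
  have hsub : Finset.Ico j (r+1) ⊆ Finset.range (r+1) := by
    rw [Finset.range_eq_Ico]; exact Finset.Ico_subset_Ico (Nat.zero_le _) le_rfl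
  have hz : ∀ m ∈ Finset.range (r+1), m ∉ Finset.Ico j (r+1) →
      binomPMF r q m * binomPMF m c j = 0 := by
    intro m hm hm'
    simp only [Finset.mem_range] at hm
    simp only [Finset.mem_Ico, not_and, not_lt] at hm'
    have : m < j := by omega
    simp [binomPMF, Nat.choose_eq_zero_of_lt this]
  rw [← Finset.sum_subset hsub hz, Finset.sum_Ico_eq_sum_range,
    show r + 1 - j = (r - j) + 1 from by omega]
  have key : ∀ t ∈ Finset.range (r - j + 1),
      binomPMF r q (j + t) * binomPMF (j + t) c j
      = ((r.choose j : ℝ) * (c*q)^j) *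
        (((r-j).choose t : ℝ) * (q*(1-c))^t * (1-q)^((r-j)-t)) := by
    intro t ht
    simp only [Finset.mem_range] at ht
    have hc2 := Nat.choose_mul (n := r) (show j ≤ j + t by omega)
    have hcR : (r.choose (j+t) : ℝ) * ((j+t).choose j : ℝ)
        = (r.choose j : ℝ) * ((r-j).choose ((j+t)-j) : ℝ) := by exact_mod_cast hc2
    unfold binomPMF
    rw [show r - (j+t) = (r-j) - t from by omega, show (j+t) - j = t from by omega] at *
    rw [pow_add, mul_pow q (1-c) t]
    linear_combination (q^j * q^t * (1-q)^((r-j)-t) * c^j * (1-c)^t) * hcR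
  rw [Finset.sum_congr rfl key, ← Finset.mul_sum]
  have hb : ∑ t ∈ Finset.range (r-j+1),
      ((r-j).choose t : ℝ) * (q*(1-c))^t * (1-q)^((r-j)-t) = (1 - c*q)^(r-j) := by
    have h := add_pow (q*(1-c)) (1-q) (r-j)
    rw [show q*(1-c) + (1-q) = 1 - c*q from by ring] at h
    rw [h]
    exact Finset.sum_congr rfl fun t _ => by ring
  rw [hb]
  unfold binomPMF
  ring

/-- `E[max_{i ∈ [k]} Bᵢ]` for `B₁, …, B_k` i.i.d. `Bin(n, p)` random variables. -/
noncomputable def binomMaxExp (k n : ℕ) (p : ℝ) : ℝ :=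
  ∑ f : Fin k → Fin (n + 1),
    (∏ i, binomPMF n p (f i)) * (((Finset.univ.sup fun i => (f i : ℕ)) : ℕ) : ℝ)

lemma sum_binomPMF' (r m : ℕ) (hm : m ≤ r) (c : ℝ) :
    ∑ j : Fin (r+1), binomPMF m c (j : ℕ) = 1 := by
  rw [Fin.sum_univ_eq_sum_range]; exact sum_binomPMF r m hm c

lemma mean_binomPMF' (r m : ℕ) (hm : m ≤ r) (c : ℝ) :
    ∑ j : Fin (r+1), binomPMF m c (j : ℕ) * ((j : ℕ) : ℝ) = c * m := by
  rw [Fin.sum_univ_eq_sum_range (fun j => binomPMF m c j * (j : ℝ))]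
  exact mean_binomPMF r m hm c

lemma thin_binomPMF' (r j : ℕ) (hj : j ≤ r) (q c : ℝ) :
    ∑ m : Fin (r+1), binomPMF r q (m : ℕ) * binomPMF (m : ℕ) c j
      = binomPMF r (c * q) j := by
  rw [Fin.sum_univ_eq_sum_range (fun m => binomPMF r q m * binomPMF m c j)]
  exact thin_binomPMF r j hj q c

/-- Let `X ~ Bin(r, c·q)` and `X' ~ Bin(r, q)` for `c ∈ [0,1]`, and let `X₁, …, X_k` be
i.i.d. copies of `X` and `X'₁, …, X'_k` i.i.d. copies of `X'`.  Then
`E[maxᵢ Xᵢ] ≥ c · E[maxᵢ X'ᵢ]`. -/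
theorem binomMaxExp_scaled (k r : ℕ) (c q : ℝ)
    (hc0 : 0 ≤ c) (hc1 : c ≤ 1) (hq0 : 0 ≤ q) (hq1 : q ≤ 1) :
    c * binomMaxExp k r q ≤ binomMaxExp k r (c * q) := by
  rcases Nat.eq_zero_or_pos k with hk | hk
  · subst hk; simp [binomMaxExp]
  have hne : (Finset.univ : Finset (Fin k)).Nonempty := ⟨⟨0, hk⟩, Finset.mem_univ _⟩
  set M : (Fin k → Fin (r+1)) → ℝ :=
    fun f => (((Finset.univ.sup fun i => ((f i : ℕ))) : ℕ) : ℝ) with hM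
  set P : (Fin k → Fin (r+1)) → (Fin k → Fin (r+1)) → ℝ :=
    fun g f => ∏ i, (binomPMF r q ((g i : ℕ)) * binomPMF ((g i : ℕ)) c ((f i : ℕ))) with hP
  have hP0 : ∀ g f, 0 ≤ P g f := fun g f => Finset.prod_nonneg fun i _ =>
    mul_nonneg (binomPMF_nonneg hq0 hq1 _) (binomPMF_nonneg hc0 hc1 _)
  -- marginal of P over g is the Bin(r, c q) product pmf
  have step1 : binomMaxExp k r (c*q) = ∑ g, ∑ f, P g f * M f := by
    rw [binomMaxExp, Finset.sum_comm]
    refine Finset.sum_congr rfl fun f _ => ?_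
    rw [← Finset.sum_mul]
    congr 1
    calc ∏ i, binomPMF r (c*q) ((f i : ℕ))
        = ∏ i, ∑ m : Fin (r+1), binomPMF r q ((m:ℕ)) * binomPMF ((m:ℕ)) c ((f i : ℕ)) :=
          Finset.prod_congr rfl fun i _ =>
            (thin_binomPMF' r (f i) (Nat.lt_succ_iff.mp (f i).isLt) q c).symm
      _ = ∑ g ∈ Fintype.piFinset (fun _ : Fin k => (Finset.univ : Finset (Fin (r+1)))),
            ∏ i, binomPMF r q ((g i : ℕ)) * binomPMF ((g i : ℕ)) c ((f i : ℕ)) :=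
          Finset.prod_univ_sum (fun _ : Fin k => (Finset.univ : Finset (Fin (r+1))))
            (fun i m => binomPMF r q ((m : ℕ)) * binomPMF ((m : ℕ)) c ((f i : ℕ)))
      _ = ∑ g, P g f := by rw [Fintype.piFinset_univ]
  -- conditional expectation of the i₀ coordinate
  have inner : ∀ (g : Fin k → Fin (r+1)) (i₀ : Fin k),
      ∑ f, P g f * (((f i₀ : ℕ)) : ℝ)
        = (∏ i, binomPMF r q ((g i : ℕ))) * (c * ((g i₀ : ℕ) : ℝ)) := by
    intro g i₀
    have h1 : ∀ f : Fin k → Fin (r+1), P g f * (((f i₀ : ℕ)) : ℝ)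
        = ∏ i, (binomPMF r q ((g i : ℕ)) * binomPMF ((g i : ℕ)) c ((f i : ℕ))
            * (if i = i₀ then (((f i : ℕ)) : ℝ) else 1)) := by
      intro f
      rw [Finset.prod_mul_distrib, Finset.prod_ite_eq' Finset.univ i₀
        (fun i => (((f i : ℕ)) : ℝ)), if_pos (Finset.mem_univ i₀)]
    calc ∑ f, P g f * (((f i₀ : ℕ)) : ℝ)
        = ∑ f ∈ Fintype.piFinset (fun _ : Fin k => (Finset.univ : Finset (Fin (r+1)))),
          ∏ i, (binomPMF r q ((g i : ℕ)) * binomPMF ((g i : ℕ)) c ((f i : ℕ))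
            * (if i = i₀ then (((f i : ℕ)) : ℝ) else 1)) := by
          rw [Fintype.piFinset_univ]; exact Finset.sum_congr rfl fun f _ => h1 f
      _ = ∏ i, ∑ x : Fin (r+1), (binomPMF r q ((g i : ℕ)) * binomPMF ((g i : ℕ)) c ((x : ℕ))
            * (if i = i₀ then (((x : ℕ)) : ℝ) else 1)) :=
          (Finset.prod_univ_sum (fun _ : Fin k => (Finset.univ : Finset (Fin (r+1))))
            (fun i x => binomPMF r q ((g i : ℕ)) * binomPMF ((g i : ℕ)) c ((x : ℕ))
              * (if i = i₀ then (((x : ℕ)) : ℝ) else 1))).symm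
      _ = ∏ i, (binomPMF r q ((g i : ℕ)) * (if i = i₀ then c * ((g i : ℕ) : ℝ) else 1)) := by
          refine Finset.prod_congr rfl fun i _ => ?_
          by_cases hi : i = i₀
          · simp only [hi, if_true]
            have he : ∀ x ∈ (Finset.univ : Finset (Fin (r+1))),
                binomPMF r q ((g i₀ : ℕ)) * binomPMF ((g i₀ : ℕ)) c ((x:ℕ)) * ((x:ℕ):ℝ)
                = binomPMF r q ((g i₀ : ℕ)) * (binomPMF ((g i₀ : ℕ)) c ((x:ℕ)) * ((x:ℕ):ℝ)) :=
              fun x _ => by ring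
            rw [Finset.sum_congr rfl he, ← Finset.mul_sum,
              mean_binomPMF' r ((g i₀ : ℕ)) (Nat.lt_succ_iff.mp (g i₀).isLt) c]
          · simp only [hi, if_false, mul_one]
            rw [← Finset.mul_sum, sum_binomPMF' r ((g i : ℕ))
              (Nat.lt_succ_iff.mp (g i).isLt) c, mul_one]
      _ = (∏ i, binomPMF r q ((g i : ℕ))) * (c * ((g i₀ : ℕ) : ℝ)) := by
          rw [Finset.prod_mul_distrib, Finset.prod_ite_eq' Finset.univ i₀
            (fun i => c * ((g i : ℕ) : ℝ)), if_pos (Finset.mem_univ i₀)]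
  have pergI : ∀ g : Fin k → Fin (r+1),
      c * ((∏ i, binomPMF r q ((g i : ℕ))) * M g) ≤ ∑ f, P g f * M f := by
    intro g
    obtain ⟨i₀, -, hi₀⟩ := Finset.exists_mem_eq_sup Finset.univ hne (fun i => ((g i : ℕ)))
    calc c * ((∏ i, binomPMF r q ((g i : ℕ))) * M g)
        = (∏ i, binomPMF r q ((g i : ℕ))) * (c * ((g i₀ : ℕ) : ℝ)) := by
          simp only [hM]; rw [hi₀]; ring
      _ = ∑ f, P g f * (((f i₀ : ℕ)) : ℝ) := (inner g i₀).symm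
      _ ≤ ∑ f, P g f * M f := Finset.sum_le_sum fun f _ =>
          mul_le_mul_of_nonneg_left (by
            simp only [hM]
            exact Nat.cast_le.mpr
              (Finset.le_sup (f := fun i => ((f i : ℕ))) (Finset.mem_univ i₀))) (hP0 g f)
  calc c * binomMaxExp k r q
      = ∑ g, c * ((∏ i, binomPMF r q ((g i : ℕ))) * M g) := by
        rw [binomMaxExp, Finset.mul_sum]
    _ ≤ ∑ g, ∑ f, P g f * M f := Finset.sum_le_sum fun g _ => pergI g
    _ = binomMaxExp k r (c*q) := step1.symm
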